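/- arXiv:1705.10212 — 7 statements merged into one kernel-verified Lean document; each statement's English description precedes it below -/
import Mathlib

section
/- Let N be a torsion-free finitely generated nilpotent group and p a prime. If H ≤ N is a subgroup of index p^α, then N^{p^α} ⊆ H, where N^m is the subgroup generated by all m-th powers. -/
/-- Old Mathlib definition (removed): a monoid is torsion-free if every non-identity element has infinite order. -/
def Monoid.IsTorsionFree (G : Type*) [Monoid G] : Prop :=
  ∀ g : G, g ≠ 1 → ¬IsOfFinOrder g

lemma pow_prime_pow_index_mem_aux (p : ℕ) (hp : p.Prime) :
    ∀ α : ℕ, ∀ {G : Type*} [Group G] [Group.IsNilpotent G] (H : Subgroup G),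
      H.index = p ^ α → ∀ g : G, g ^ (p ^ α) ∈ H := by
  intro α
  induction α using Nat.strong_induction_on with
  | _ α ih =>
    intro G _ _ H hind g
    by_cases hH : H = ⊤
    · simp [hH]
    have hlt : H < Subgroup.normalizer (H : Set G) :=
      normalizerCondition_of_isNilpotent H (lt_top_iff_ne_top.mpr hH)
    set K := Subgroup.normalizer (H : Set G) with hK
    have hm : H.relIndex K * K.index = H.index := Subgroup.relIndex_mul_index hlt.le
    have hdvd : K.index ∣ p ^ α := by
      rw [← hind]; exact Dvd.intro_left _ hm
    obtain ⟨β, hβle, hKidx⟩ := (Nat.dvd_prime_pow hp).mp hdvd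
    have hrel : H.relIndex K = p ^ (α - β) := by
      have hpβ : 0 < (p : ℕ) ^ β := pow_pos hp.pos _
      have h2 : H.relIndex K * p ^ β = p ^ (α - β) * p ^ β := by
        rw [← pow_add, Nat.sub_add_cancel hβle, ← hind, ← hKidx]
        exact hm
      exact Nat.eq_of_mul_eq_mul_right hpβ h2
    have hne1 : H.relIndex K ≠ 1 := fun h =>
      hlt.not_ge (Subgroup.relIndex_eq_one.mp h)
    have hβlt : β < α := by
      rcases Nat.lt_or_ge β α with h | h
      · exact h
      · exfalso
        apply hne1
        rw [hrel, Nat.sub_eq_zero_of_le h, pow_zero]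
    have hgK : g ^ (p ^ β) ∈ K := ih β hβlt K hKidx g
    have hnorm : (H.subgroupOf K).Normal := Subgroup.normal_in_normalizer
    have hidx : (H.subgroupOf K).index = p ^ (α - β) := by
      rw [← hrel]; rfl
    have hmem := Subgroup.pow_index_mem (H.subgroupOf K) (⟨g ^ (p ^ β), hgK⟩ : K)
    rw [hidx] at hmem
    rw [Subgroup.mem_subgroupOf] at hmem
    have hpow : (g ^ p ^ β) ^ p ^ (α - β) = g ^ p ^ α := by
      rw [← pow_mul, ← pow_add, Nat.add_sub_cancel' hβle]
    simpa [hpow] using hmem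

theorem power_subgroup_le_of_prime_power_index (N : Type*) [Group N]
    [Group.IsNilpotent N] (hfg : Group.FG N) (htf : Monoid.IsTorsionFree N)
    (p : ℕ) (hp : p.Prime) (α : ℕ) (H : Subgroup N) (hind : H.index = p ^ α) :
    Subgroup.closure {x : N | ∃ g : N, x = g ^ (p ^ α)} ≤ H := by
  rw [Subgroup.closure_le]
  rintro x ⟨g, rfl⟩
  exact pow_prime_pow_index_mem_aux p hp α H hind g
end

section
/- Let N be a torsion-free finitely generated nilpotent group and H ≤ N a subgroup. Then the isolator √[N]{H} = { x ∈ N : ∃ k ≥ 1, x^k ∈ H } is a subgroup of N. -/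
open Subgroup
open scoped commutatorElement

universe u

lemma lcs_succ_comm (G : Type u) [Group G] (n : ℕ) :
    Subgroup.lowerCentralSeries (⊤ : Subgroup G) (n + 1) = ⁅Subgroup.lowerCentralSeries (⊤ : Subgroup G) n, (⊤ : Subgroup G)⁆ := rfl

lemma lcs_map_eq {G G' : Type u} [Group G] [Group G'] (f : G →* G')
    (hf : Function.Surjective f) (n : ℕ) :
    Subgroup.map f (Subgroup.lowerCentralSeries (⊤ : Subgroup G) n) = Subgroup.lowerCentralSeries (⊤ : Subgroup G') n := by
  induction n with
  | zero =>
    simpa [Subgroup.lowerCentralSeries_zero] using Subgroup.map_top_of_surjective f hf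
  | succ n ih =>
    rw [lcs_succ_comm, lcs_succ_comm, Subgroup.map_commutator, ih,
      Subgroup.map_top_of_surjective f hf]

lemma comm_mul_left {G : Type u} [Group G] (a b c : G) :
    ⁅a * b, c⁆ = a * ⁅b, c⁆ * a⁻¹ * ⁅a, c⁆ := by group

lemma comm_mul_right {G : Type u} [Group G] (a b c : G) :
    ⁅a, b * c⁆ = ⁅a, b⁆ * (b * ⁅a, c⁆ * b⁻¹) := by group

lemma main_lemma : ∀ (c : ℕ) (G : Type u) [Group G],
    Subgroup.lowerCentralSeries (⊤ : Subgroup G) c = ⊥ → ∀ (H : Subgroup G) (S : Set G),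
    (∀ s ∈ S, ∃ k : ℕ, 0 < k ∧ s ^ k ∈ H) → Subgroup.closure S = ⊤ →
    ∀ g : G, ∃ k : ℕ, 0 < k ∧ g ^ k ∈ H := by
  intro c
  induction c with
  | zero =>
    intro G _ hc H S hS htop g
    have hg : g ∈ Subgroup.lowerCentralSeries (⊤ : Subgroup G) 0 := by rw [Subgroup.lowerCentralSeries_zero]; trivial
    rw [hc, Subgroup.mem_bot] at hg
    exact ⟨1, one_pos, by rw [hg, one_pow]; exact H.one_mem⟩
  | succ c ih =>
    intro G _ hc H S hS htop g
    rcases Nat.eq_zero_or_pos c with rfl | hcpos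
    · -- abelian case
      have hcomm : ∀ x y : G, Commute x y := by
        intro x y
        have : ⁅x, y⁆ ∈ Subgroup.lowerCentralSeries (⊤ : Subgroup G) 1 := by
          rw [lcs_succ_comm]
          exact commutator_mem_commutator (by rw [Subgroup.lowerCentralSeries_zero]; trivial) trivial
        rw [hc, Subgroup.mem_bot] at this
        exact commutatorElement_eq_one_iff_commute.mp this
      let K : Subgroup G :=
        { carrier := {x | ∃ k : ℕ, 0 < k ∧ x ^ k ∈ H}
          one_mem' := ⟨1, one_pos, by simpa using H.one_mem⟩
          mul_mem' := by
            rintro a b ⟨k, hk, hak⟩ ⟨l, hl, hbl⟩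
            refine ⟨k * l, Nat.mul_pos hk hl, ?_⟩
            rw [(hcomm a b).mul_pow]
            exact H.mul_mem (by rw [pow_mul]; exact H.pow_mem hak l)
              (by rw [mul_comm k l, pow_mul]; exact H.pow_mem hbl k)
          inv_mem' := by
            rintro a ⟨k, hk, hak⟩
            exact ⟨k, hk, by rw [inv_pow]; exact H.inv_mem hak⟩ }
      have : g ∈ K := by
        have : Subgroup.closure S ≤ K := (Subgroup.closure_le K).2 hS
        exact this (htop ▸ Subgroup.mem_top g)
      exact this
    · -- c ≥ 1
      obtain ⟨d, rfl⟩ : ∃ d, c = d + 1 := ⟨c - 1, (Nat.succ_pred_eq_of_pos hcpos).symm⟩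
      set L : Subgroup G := Subgroup.lowerCentralSeries (⊤ : Subgroup G) (d + 1) with hL
      -- L is central
      have hcent : ∀ z ∈ L, ∀ w : G, Commute z w := by
        intro z hz w
        have : ⁅z, w⁆ ∈ Subgroup.lowerCentralSeries (⊤ : Subgroup G) (d + 1 + 1) := by
          rw [lcs_succ_comm]; exact commutator_mem_commutator hz trivial
        rw [hc, Subgroup.mem_bot] at this
        exact commutatorElement_eq_one_iff_commute.mp this
      -- quotient setup
      let π : G →* G ⧸ L := QuotientGroup.mk' L
      have hπsurj : Function.Surjective π := QuotientGroup.mk'_surjective L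
      have hqc : Subgroup.lowerCentralSeries (⊤ : Subgroup (G ⧸ L)) (d + 1) = ⊥ := by
        rw [← lcs_map_eq π hπsurj, Subgroup.map_eq_bot_iff]
        rw [QuotientGroup.ker_mk']
      have hqS : ∀ s ∈ (π '' S), ∃ k : ℕ, 0 < k ∧ s ^ k ∈ Subgroup.map π H := by
        rintro _ ⟨s, hs, rfl⟩
        obtain ⟨k, hk, hsk⟩ := hS s hs
        exact ⟨k, hk, by rw [← map_pow]; exact Subgroup.mem_map_of_mem π hsk⟩
      have hqtop : Subgroup.closure (π '' S) = ⊤ := by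
        rw [← MonoidHom.map_closure, htop, Subgroup.map_top_of_surjective π hπsurj]
      -- every element of G has a power in H * L
      have hHL : ∀ w : G, ∃ (a : ℕ) (h z : G), 0 < a ∧ h ∈ H ∧ z ∈ L ∧ w ^ a = h * z := by
        intro w
        obtain ⟨a, ha, hwa⟩ := ih (G ⧸ L) hqc (Subgroup.map π H) (π '' S) hqS hqtop (π w)
        rw [← map_pow] at hwa
        obtain ⟨h, hh, hhw⟩ := hwa
        refine ⟨a, h, h⁻¹ * w ^ a, ha, hh, ?_, by group⟩
        have : π (h⁻¹ * w ^ a) = 1 := by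
          rw [map_mul, map_inv, hhw]; group
        rwa [← QuotientGroup.ker_mk' L, MonoidHom.mem_ker]
      -- the subgroup T of L-elements with a power in H
      let T : Subgroup G :=
        { carrier := {z | z ∈ L ∧ ∃ k : ℕ, 0 < k ∧ z ^ k ∈ H}
          one_mem' := ⟨L.one_mem, 1, one_pos, by simpa using H.one_mem⟩
          mul_mem' := by
            rintro a b ⟨haL, k, hk, hak⟩ ⟨hbL, l, hl, hbl⟩
            refine ⟨L.mul_mem haL hbL, k * l, Nat.mul_pos hk hl, ?_⟩
            rw [(hcent a haL b).mul_pow]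
            exact H.mul_mem (by rw [pow_mul]; exact H.pow_mem hak l)
              (by rw [mul_comm k l, pow_mul]; exact H.pow_mem hbl k)
          inv_mem' := by
            rintro a ⟨haL, k, hk, hak⟩
            exact ⟨L.inv_mem haL, k, hk, by rw [inv_pow]; exact H.inv_mem hak⟩ }
      -- KEY : L ≤ T
      have hLT : L ≤ T := by
        rw [hL, lcs_succ_comm]
        rw [Subgroup.commutator_le]
        intro u hu q _
        -- homomorphism property in first variable
        have hhom1 : ∀ v w : G, v ∈ Subgroup.lowerCentralSeries (⊤ : Subgroup G) d → w ∈ Subgroup.lowerCentralSeries (⊤ : Subgroup G) d →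
            ⁅v * w, q⁆ = ⁅v, q⁆ * ⁅w, q⁆ := by
          intro v w hv hw
          have hwqL : ⁅w, q⁆ ∈ L := by
            rw [hL, lcs_succ_comm]; exact commutator_mem_commutator hw trivial
          rw [comm_mul_left]
          have h1 : v * ⁅w, q⁆ * v⁻¹ = ⁅w, q⁆ := by
            rw [(hcent _ hwqL v).symm.eq]; group
          rw [h1, (hcent _ hwqL ⁅v, q⁆).eq]
        have hupow : ∀ a : ℕ, ⁅u ^ a, q⁆ = ⁅u, q⁆ ^ a := by
          intro a
          induction a with
          | zero => simp [commutatorElement]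
          | succ a iha =>
            rw [pow_succ', pow_succ', hhom1 u (u ^ a) hu ((Subgroup.lowerCentralSeries (⊤ : Subgroup G) d).pow_mem hu a), iha]
        obtain ⟨a, h, z, ha, hh, hzL, hua⟩ := hHL u
        have hcomm_hq : ⁅h, q⁆ = ⁅u, q⁆ ^ a := by
          rw [← hupow, hua, comm_mul_left,
            commutatorElement_eq_one_iff_commute.mpr (hcent z hzL q)]
          group
        have huqL : ⁅u, q⁆ ∈ L := by
          rw [hL, lcs_succ_comm]; exact commutator_mem_commutator hu trivial
        have hhqL : ⁅h, q⁆ ∈ L := by rw [hcomm_hq]; exact L.pow_mem huqL a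
        have hqpow : ∀ b : ℕ, ⁅h, q ^ b⁆ = ⁅h, q⁆ ^ b := by
          intro b
          induction b with
          | zero => simp [commutatorElement]
          | succ b ihb =>
            rw [pow_succ', comm_mul_right, ihb,
              ((hcent _ (L.pow_mem hhqL b) q).symm.eq)]
            group
        obtain ⟨b, h', z', hb, hh', hz'L, hqb⟩ := hHL q
        have final : ⁅u, q⁆ ^ (a * b) ∈ H := by
          rw [pow_mul, ← hcomm_hq, ← hqpow, hqb, comm_mul_right,
            commutatorElement_eq_one_iff_commute.mpr (hcent z' hz'L h).symm]
          simpa [commutatorElement_def] using H.mul_mem (H.mul_mem (H.mul_mem hh hh') (H.inv_mem hh)) (H.inv_mem hh')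
        exact ⟨huqL, a * b, Nat.mul_pos ha hb, final⟩
      -- conclude
      obtain ⟨a, h, z, ha, hh, hzL, hga⟩ := hHL g
      obtain ⟨-, t, ht, hzt⟩ := hLT hzL
      refine ⟨a * t, Nat.mul_pos ha ht, ?_⟩
      rw [pow_mul, hga, ((hcent z hzL h).symm.mul_pow t)]
      exact H.mul_mem (H.pow_mem hh t) hzt

theorem isolator_is_subgroup (N : Type*) [Group N] [Group.IsNilpotent N]
    (hfg : Group.FG N) (htf : Monoid.IsTorsionFree N) (H : Subgroup N) :
    ∃ K : Subgroup N, ∀ x : N, x ∈ K ↔ ∃ k : ℕ, 0 < k ∧ x ^ k ∈ H := by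
  obtain ⟨c, hc⟩ := Subgroup.nilpotent_iff_lowerCentralSeries.mp ‹Group.IsNilpotent N›
  have key : ∀ x y : N, (∃ k : ℕ, 0 < k ∧ x ^ k ∈ H) → (∃ k : ℕ, 0 < k ∧ y ^ k ∈ H) →
      ∃ k : ℕ, 0 < k ∧ (x * y) ^ k ∈ H := by
    intro x y hx hy
    set G₀ : Subgroup N := Subgroup.closure {x, y} with hG₀
    have hxG : x ∈ G₀ := Subgroup.subset_closure (by simp)
    have hyG : y ∈ G₀ := Subgroup.subset_closure (by simp)
    have hbot : Subgroup.lowerCentralSeries (⊤ : Subgroup G₀) c = ⊥ := by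
      have h1 := Subgroup.lowerCentralSeries_map_subtype_le G₀ c
      rw [hc] at h1
      have h2 : Subgroup.map G₀.subtype (Subgroup.lowerCentralSeries (⊤ : Subgroup G₀) c) = ⊥ := le_bot_iff.mp h1
      rw [Subgroup.map_eq_bot_iff, Subgroup.ker_subtype, le_bot_iff] at h2
      exact h2
    have htop : Subgroup.closure (Subtype.val ⁻¹' ({x, y} : Set N) : Set G₀) = ⊤ :=
      Subgroup.closure_closure_coe_preimage
    have hS : ∀ s ∈ (Subtype.val ⁻¹' ({x, y} : Set N) : Set G₀),
        ∃ k : ℕ, 0 < k ∧ s ^ k ∈ H.subgroupOf G₀ := by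
      rintro s hs
      simp only [Set.mem_preimage, Set.mem_insert_iff, Set.mem_singleton_iff] at hs
      rcases hs with h | h
      · obtain ⟨k, hk, hxk⟩ := hx
        refine ⟨k, hk, ?_⟩
        rw [Subgroup.mem_subgroupOf]
        simp only [SubmonoidClass.coe_pow, h]
        exact hxk
      · obtain ⟨k, hk, hyk⟩ := hy
        refine ⟨k, hk, ?_⟩
        rw [Subgroup.mem_subgroupOf]
        simp only [SubmonoidClass.coe_pow, h]
        exact hyk
    obtain ⟨k, hk, hxyk⟩ := main_lemma c G₀ hbot (H.subgroupOf G₀)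
      (Subtype.val ⁻¹' ({x, y} : Set N)) hS htop ⟨x * y, G₀.mul_mem hxG hyG⟩
    rw [Subgroup.mem_subgroupOf] at hxyk
    simp only [SubmonoidClass.coe_pow] at hxyk
    exact ⟨k, hk, hxyk⟩
  refine ⟨{ carrier := {x | ∃ k : ℕ, 0 < k ∧ x ^ k ∈ H}
            one_mem' := ⟨1, one_pos, by simpa using H.one_mem⟩
            mul_mem' := fun ha hb => key _ _ ha hb
            inv_mem' := by
              rintro a ⟨k, hk, hak⟩
              exact ⟨k, hk, by rw [inv_pow]; exact H.inv_mem hak⟩ }, fun x => Iff.rfl⟩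
end

section
/- Let p be a prime and φ : A → B a homomorphism of abelian groups with B finitely generated, such that φ(A) has finite index d in its isolator √[B]{φ(A)}. If b ∈ φ(A) ∩ p^{k + v_p(d)}·B for some k ≥ 0, then there exists a ∈ p^k·A with φ(a) = b, where v_p(d) is the p-adic valuation of d. -/
theorem preimage_power_lemma_abelian (A B : Type*) [AddCommGroup A] [AddCommGroup B]
    (hfg : AddGroup.FG B) (p : ℕ) (hp : p.Prime) (φ : A →+ B)
    (I : AddSubgroup B)
    (hI : ∀ b : B, b ∈ I ↔ ∃ n : ℕ, 0 < n ∧ n • b ∈ φ.range)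
    (d : ℕ) (hd : φ.range.relIndex I = d) (hdpos : 0 < d) :
    ∀ (k : ℕ) (b : B), b ∈ φ.range →
      (∃ c : B, b = p ^ (k + d.factorization p) • c) →
      ∃ a : A, φ (p ^ k • a) = b := by
  intro k b hb hc
  obtain ⟨c, rfl⟩ := hc
  set v := d.factorization p with hv
  have hcI : c ∈ I := (hI c).2 ⟨p ^ (k + v), pow_pos hp.pos _, hb⟩
  -- d • c ∈ range
  have hdc : d • c ∈ φ.range := by
    have hfi : (φ.range.addSubgroupOf I).FiniteIndex := by
      constructor
      rw [show (φ.range.addSubgroupOf I).index = φ.range.relIndex I from rfl, hd]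
      exact hdpos.ne'
    have := AddSubgroup.nsmul_index_mem (φ.range.addSubgroupOf I) (⟨c, hcI⟩ : I)
    rw [show (φ.range.addSubgroupOf I).index = φ.range.relIndex I from rfl, hd] at this
    rw [AddSubgroup.mem_addSubgroupOf] at this
    simpa using this
  set m : ℕ := d / p ^ v with hm
  have hdm : p ^ v * m = d := Nat.ordProj_mul_ordCompl_eq_self d p
  have hcop : IsCoprime ((m : ℤ)) ((p : ℤ) ^ (k + v)) := by
    rw [isCoprime_comm, ← Int.natCast_pow, Nat.isCoprime_iff_coprime]
    exact (Nat.Prime.coprime_iff_not_dvd hp |>.2 (Nat.not_dvd_ordCompl hp hdpos.ne')).pow_left _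
  obtain ⟨u, w, huw⟩ := hcop
  have hkey : (p : ℤ) ^ v • c ∈ φ.range := by
    have h1 : (p : ℤ) ^ v • c = u • ((d : ℤ) • c) + w • ((p : ℤ) ^ v • (((p : ℤ) ^ (k + v)) • c)) := by
      rw [smul_smul, smul_smul, smul_smul, ← add_smul]
      congr 1
      have : (d : ℤ) = (p : ℤ) ^ v * (m : ℤ) := by exact_mod_cast hdm.symm
      linear_combination (-((p : ℤ) ^ v)) * huw - u * this
    rw [h1]
    refine AddSubgroup.add_mem _ (AddSubgroup.zsmul_mem _ ?_ _) (AddSubgroup.zsmul_mem _ (AddSubgroup.zsmul_mem _ ?_ _) _)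
    · rw [natCast_zsmul]; exact hdc
    · rw [show ((p:ℤ)^(k+v)) = ((p^(k+v) : ℕ) : ℤ) by push_cast; ring, natCast_zsmul]
      exact hb
  obtain ⟨a, ha⟩ := hkey
  refine ⟨a, ?_⟩
  rw [map_nsmul, ha, ← natCast_zsmul ((p:ℤ) ^ v • c) (p ^ k), smul_smul,
    ← natCast_zsmul c (p ^ (k + v))]
  congr 1
  push_cast
  ring
end

section
/- For every finitely generated abelian group A with finite generating set S, there is a constant C > 0 such that every subgroup H ≤ A satisfies det(H) ≤ C·(‖H‖_S)^{rank(H)}, where det(H) = [√[A]{H} : H] and ‖H‖_S is the minimal bound on word lengths of a generating set for H. -/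
open scoped TensorProduct

variable {A : Type*} [AddCommGroup A]

/-- Word length of `x` with respect to a generating set `S` (inverses allowed). -/
noncomputable def wordLength (S : Set A) (x : A) : ℕ :=
  sInf {n | ∃ l : List A, (∀ g ∈ l, g ∈ S ∨ -g ∈ S) ∧ l.length = n ∧ l.sum = x}

/-- The norm `‖H‖_S` of a subgroup: the minimal bound on the word lengths of the
elements of a finite generating set of `H`. -/
noncomputable def subgroupNorm (S : Set A) (H : AddSubgroup A) : ℕ :=
  sInf {m | ∃ X : Finset A, AddSubgroup.closure ↑X = H ∧ ∀ x ∈ X, wordLength S x ≤ m}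

/-- The isolator `√[A]{H}` of a subgroup `H` of an abelian group. -/
def isolator (H : AddSubgroup A) : AddSubgroup A where
  carrier := {x | ∃ n : ℕ, 0 < n ∧ n • x ∈ H}
  zero_mem' := ⟨1, one_pos, by simpa using H.zero_mem⟩
  add_mem' := by
    rintro x y ⟨n, hn, hx⟩ ⟨m, hm, hy⟩
    refine ⟨n * m, Nat.mul_pos hn hm, ?_⟩
    rw [smul_add]
    exact H.add_mem (by rw [mul_comm, mul_smul]; exact AddSubgroup.nsmul_mem H hx m)
      (by rw [mul_smul]; exact AddSubgroup.nsmul_mem H hy n)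
  neg_mem' := by
    rintro x ⟨n, hn, hx⟩
    exact ⟨n, hn, by rw [smul_neg]; exact H.neg_mem hx⟩

/-- `det(H) = [√[A]{H} : H]`. -/
noncomputable def subgroupDet (H : AddSubgroup A) : ℕ := H.relIndex (isolator H)

/-- The torsion-free rank of a subgroup. -/
noncomputable def subgroupRank (H : AddSubgroup A) : ℕ :=
  Module.finrank ℚ (ℚ ⊗[ℤ] ↥H)


section Aux

open Module Submodule

lemma aux_card_coker {ι : Type*} [Fintype ι] [DecidableEq ι]
    (g : (ι → ℤ) →ₗ[ℤ] (ι → ℤ)) (hg : Function.Injective g) :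
    Finite ((ι → ℤ) ⧸ (LinearMap.range g).toAddSubgroup) ∧
    Nat.card ((ι → ℤ) ⧸ (LinearMap.range g).toAddSubgroup) = (LinearMap.det g).natAbs := by
  set N := LinearMap.range g with hN
  obtain ⟨n, snf⟩ := N.smithNormalForm (Pi.basisFun ℤ ι)
  obtain ⟨bM, bN, f, a, hsnf⟩ := snf
  have hcard : n = Fintype.card ι := by
    have h1 : finrank ℤ ↥N = n := by
      rw [finrank_eq_card_basis bN, Fintype.card_fin]
    have h2 : finrank ℤ ↥N = Fintype.card ι := by
      have e := (LinearEquiv.ofInjective g hg)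
      rw [← LinearEquiv.finrank_eq e, finrank_pi ℤ]
    omega
  have hf : Function.Bijective f :=
    (Fintype.bijective_iff_injective_and_card f).mpr ⟨f.injective, by simp [hcard]⟩
  let σ : Fin n ≃ ι := Equiv.ofBijective f hf
  have hσ : ∀ j : ι, f (σ.symm j) = j := fun j => σ.apply_symm_apply j
  have ha : ∀ i, a i ≠ 0 := by
    intro i h
    refine bN.ne_zero i ?_
    have := hsnf i
    rw [h, zero_smul] at this
    exact Subtype.coe_injective this
  -- key computation of coordinates of combinations
  have key2 : ∀ (c : Fin n → ℤ) (j : Fin n),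
      bM.repr (∑ i, c i • bM (f i)) (f j) = c j := by
    intro c j
    rw [map_sum]
    simp only [map_smul, Finsupp.coe_finset_sum, Finset.sum_apply, Finsupp.coe_smul,
      Pi.smul_apply, Basis.repr_self]
    rw [Finset.sum_eq_single j]
    · simp [Finsupp.single_apply]
    · intro i _ hij
      simp [Finsupp.single_apply, f.injective.ne hij]
    · simp
  have key : ∀ (c : Fin n → ℤ) (j : Fin n),
      bM.repr (∑ i, c i • a i • bM (f i)) (f j) = a j * c j := by
    intro c j
    simp_rw [smul_smul]
    rw [key2 (fun i => c i * a i) j, mul_comm]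
  have mem_iff : ∀ x : ι → ℤ, x ∈ N ↔ ∀ i : Fin n, a i ∣ bM.repr x (f i) := by
    intro x
    rw [bN.mem_submodule_iff']
    constructor
    · rintro ⟨c, rfl⟩ i
      simp_rw [hsnf]
      exact ⟨c i, key c i⟩
    · intro h
      choose c hc using h
      refine ⟨c, bM.repr.injective (Finsupp.ext fun j => ?_)⟩
      obtain ⟨i, rfl⟩ := hf.2 j
      simp_rw [hsnf]
      rw [key c i, ← hc i]
  classical
  haveI hNZ : ∀ i, NeZero (a i).natAbs := fun i => ⟨Int.natAbs_ne_zero.mpr (ha i)⟩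
  let φ : (ι → ℤ) →+ Π i : Fin n, ZMod (a i).natAbs :=
    { toFun := fun x i => ((bM.repr x (f i) : ℤ) : ZMod (a i).natAbs)
      map_zero' := by ext i; simp
      map_add' := by intro x y; ext i; simp }
  have hker : φ.ker = N.toAddSubgroup := by
    ext x
    simp only [AddMonoidHom.mem_ker, Submodule.mem_toAddSubgroup, mem_iff x, φ]
    rw [funext_iff]
    refine forall_congr' fun i => ?_
    rw [AddMonoidHom.coe_mk, ZeroHom.coe_mk]
    rw [Pi.zero_apply, ZMod.intCast_zmod_eq_zero_iff_dvd, Int.natAbs_dvd]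
  have hsurj : Function.Surjective φ := by
    intro y
    have hz : ∀ i, ∃ z : ℤ, ((z : ℤ) : ZMod (a i).natAbs) = y i :=
      fun i => ZMod.intCast_surjective (y i)
    choose z hz using hz
    refine ⟨∑ i, z i • bM (f i), ?_⟩
    ext j
    show ((bM.repr (∑ i, z i • bM (f i)) (f j) : ℤ) : ZMod (a j).natAbs) = y j
    rw [key2 z j, hz j]
  have e1 : ((ι → ℤ) ⧸ N.toAddSubgroup) ≃+ Π i : Fin n, ZMod (a i).natAbs :=
    (QuotientAddGroup.quotientAddEquivOfEq hker.symm).trans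
      (QuotientAddGroup.quotientKerEquivOfSurjective φ hsurj)
  haveI : Finite ((ι → ℤ) ⧸ N.toAddSubgroup) := Finite.of_equiv _ e1.symm.toEquiv
  refine ⟨inferInstance, ?_⟩
  have hcardq : Nat.card ((ι → ℤ) ⧸ N.toAddSubgroup) = ∏ i : Fin n, (a i).natAbs := by
    rw [Nat.card_congr e1.toEquiv, Nat.card_pi]
    simp [Nat.card_zmod]
  -- determinant computation
  let e : (ι → ℤ) ≃ₗ[ℤ] ↥N := LinearEquiv.ofInjective g hg
  let e' : (ι → ℤ) ≃ₗ[ℤ] ↥N := bM.equiv bN σ.symm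
  have hg_eq : g = N.subtype ∘ₗ (e : (ι → ℤ) →ₗ[ℤ] ↥N) := by ext x; rfl
  have hdet1 : (LinearMap.det g).natAbs
      = (LinearMap.det (N.subtype ∘ₗ (e' : (ι → ℤ) →ₗ[ℤ] ↥N))).natAbs := by
    rw [hg_eq]
    exact Int.natAbs_eq_iff_associated.mpr (LinearMap.associated_det_comp_equiv N.subtype e e')
  have hmat : LinearMap.toMatrix bM bM (N.subtype ∘ₗ (e' : (ι → ℤ) →ₗ[ℤ] ↥N)) =
      Matrix.diagonal (fun j => a (σ.symm j)) := by
    ext i j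
    rw [LinearMap.toMatrix_apply]
    simp only [LinearMap.comp_apply, LinearEquiv.coe_coe, Submodule.coe_subtype]
    rw [show e' (bM j) = bN (σ.symm j) from bM.equiv_apply j bN σ.symm]
    rw [hsnf, hσ]
    rw [LinearEquiv.map_smul, Basis.repr_self, Finsupp.smul_apply, Finsupp.single_apply]
    rcases eq_or_ne i j with rfl | hij
    · simp
    · simp [Matrix.diagonal_apply_ne _ hij, Ne.symm hij]
  have hdet2 : LinearMap.det (N.subtype ∘ₗ (e' : (ι → ℤ) →ₗ[ℤ] ↥N)) = ∏ j : ι, a (σ.symm j) := by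
    rw [← LinearMap.det_toMatrix bM, hmat, Matrix.det_diagonal]
  rw [hcardq, hdet1, hdet2]
  rw [show (∏ j : ι, a (σ.symm j)) = ∏ i : Fin n, a i from Equiv.prod_comp σ.symm a]
  exact (map_prod Int.natAbsHom a Finset.univ).symm

lemma subsingleton_qtensor (M : Type*) [AddCommGroup M] [Subsingleton M] :
    Subsingleton (ℚ ⊗[ℤ] M) := by
  have h : ∀ x : ℚ ⊗[ℤ] M, x = 0 := by
    intro x
    induction x using TensorProduct.induction_on with
    | zero => rfl
    | tmul q m => rw [Subsingleton.elim m 0, TensorProduct.tmul_zero]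
    | add a b ha hb => rw [ha, hb, add_zero]
  exact ⟨fun a b => by rw [h a, h b]⟩

lemma neg_list_sum (l : List A) : (l.map (fun g => -g)).sum = -l.sum := by
  induction l with
  | nil => simp
  | cons a l ihl => rw [List.map_cons, List.sum_cons, List.sum_cons, neg_add, ihl]

lemma exists_word_of_mem_closure {S : Set A} {x : A} (hx : x ∈ AddSubgroup.closure S) :
    ∃ l : List A, (∀ g ∈ l, g ∈ S ∨ -g ∈ S) ∧ l.sum = x := by
  induction hx using AddSubgroup.closure_induction with
  | mem y hy => exact ⟨[y], by simp [hy], by simp⟩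
  | zero => exact ⟨[], by simp, rfl⟩
  | add x y _ _ ihx ihy =>
    obtain ⟨l1, h1, h2⟩ := ihx
    obtain ⟨l3, h3, h4⟩ := ihy
    refine ⟨l1 ++ l3, ?_, by rw [List.sum_append, h2, h4]⟩
    intro g hg
    rcases List.mem_append.mp hg with h | h
    exacts [h1 g h, h3 g h]
  | neg x _ ih =>
    obtain ⟨l1, h1, h2⟩ := ih
    have hsum : (l1.map (fun g => -g)).sum = -l1.sum := neg_list_sum l1
    refine ⟨l1.map (fun g => -g), ?_, by rw [hsum, h2]⟩
    intro g hg
    obtain ⟨g', hg', rfl⟩ := List.mem_map.mp hg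
    rcases h1 g' hg' with h | h
    · exact Or.inr (by simpa using h)
    · exact Or.inl h

lemma exists_word_len {S : Set A} (hS : AddSubgroup.closure S = ⊤) (x : A) :
    ∃ l : List A, (∀ g ∈ l, g ∈ S ∨ -g ∈ S) ∧ l.length = wordLength S x ∧ l.sum = x := by
  have hx : x ∈ AddSubgroup.closure S := by rw [hS]; trivial
  obtain ⟨l, h1, h2⟩ := exists_word_of_mem_closure hx
  have hne : {n | ∃ l : List A, (∀ g ∈ l, g ∈ S ∨ -g ∈ S) ∧ l.length = n ∧ l.sum = x}.Nonempty :=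
    ⟨l.length, l, h1, rfl, h2⟩
  have hmem := Nat.sInf_mem hne
  exact hmem

lemma coord_bound {ι : Type*} (π : A →ₗ[ℤ] (ι → ℤ)) {S : Set A} {C0 : ℤ}
    (hC0 : ∀ s ∈ S, ∀ i, |π s i| ≤ C0) :
    ∀ l : List A, (∀ g ∈ l, g ∈ S ∨ -g ∈ S) → ∀ i, |π l.sum i| ≤ l.length * C0 := by
  intro l
  induction l with
  | nil => intro _ i; simp
  | cons a l ih =>
    intro h i
    have ha : |π a i| ≤ C0 := by
      rcases h a List.mem_cons_self with hs | hs
      · exact hC0 a hs i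
      · have h' := hC0 _ hs i
        rw [map_neg] at h'
        simpa using h'
    have hl := ih (fun g hg => h g (List.mem_cons_of_mem _ hg)) i
    have : π (a :: l).sum i = π a i + π l.sum i := by
      rw [List.sum_cons, map_add]
      rfl
    rw [this, List.length_cons]
    calc |π a i + π l.sum i| ≤ |π a i| + |π l.sum i| := abs_add_le _ _
    _ ≤ C0 + l.length * C0 := add_le_add ha hl
    _ = (l.length + 1 : ℕ) * C0 := by push_cast; ring

lemma main_count {ι : Type*} [Fintype ι] [DecidableEq ι]
    (π : A →ₗ[ℤ] (ι → ℤ)) [hfin : Finite (LinearMap.ker π)]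
    (H : AddSubgroup A) (X : Finset A) (hX : AddSubgroup.closure (X : Set A) = H)
    (B : ℕ) (hXB : ∀ x ∈ X, ∀ i, |π x i| ≤ (B : ℤ)) :
    ∃ r : ℕ, r ≤ subgroupRank H ∧ r ≤ Fintype.card ι ∧
      subgroupDet H ≤ Nat.card (LinearMap.ker π) * (r.factorial * B ^ r) := by
  classical
  -- the span of X as a submodule
  set Hs : Submodule ℤ A := span ℤ (X : Set A) with hHsdef
  have hHs : Hs.toAddSubgroup = H := by
    rw [hHsdef, Submodule.span_int_eq_addSubgroupClosure, hX]
  have hmemH : ∀ x : A, x ∈ H ↔ x ∈ Hs := by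
    intro x; rw [← hHs]; rfl
  set L : Submodule ℤ (ι → ℤ) := Submodule.map π Hs with hLdef
  -- the rational cast map
  set castLin : (ι → ℤ) →ₗ[ℤ] (ι → ℚ) :=
    LinearMap.pi (fun i => (Int.castAddHom ℚ).toIntLinearMap ∘ₗ LinearMap.proj i) with hcastdef
  have castLin_apply : ∀ v : (ι → ℤ), ∀ i, castLin v i = (v i : ℚ) := fun v i => rfl
  have castLin_inj : Function.Injective castLin := by
    intro v w h
    funext i
    have := congrFun h i
    rw [castLin_apply, castLin_apply] at this
    exact_mod_cast this
  -- the rational span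
  set V : Submodule ℚ (ι → ℚ) := span ℚ (castLin '' (π '' (X : Set A))) with hVdef
  have hVle : ∀ z ∈ L, castLin z ∈ V := by
    intro z hz
    have h1 : castLin z ∈ Submodule.map castLin L := Submodule.mem_map_of_mem hz
    have h2 : Submodule.map castLin L = span ℤ (castLin '' (π '' (X : Set A))) := by
      rw [hLdef, hHsdef, Submodule.map_span, Submodule.map_span]
    have h3 : span ℤ (castLin '' (π '' (X : Set A))) ≤
        (span ℚ (castLin '' (π '' (X : Set A)))).restrictScalars ℤ :=
      Submodule.span_le.2 (fun y hy => Submodule.subset_span hy)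
    rw [h2] at h1
    exact h3 h1
  -- choose a maximal linearly independent subset
  obtain ⟨tset, htsub, htspan, htind⟩ := exists_linearIndependent ℚ (castLin '' (π '' (X : Set A)))
  have htfin : tset.Finite :=
    Set.Finite.subset ((X.finite_toSet.image _).image _) htsub
  set t' : Type _ := ↥tset with ht'def
  haveI : Fintype t' := htfin.fintype
  set r : ℕ := Fintype.card t' with hrdef
  have hVspan : V = span ℚ tset := htspan.symm
  have hrV : finrank ℚ ↥V = r := by
    rw [hVspan, ← Subtype.range_coe (s := tset)]
    exact finrank_span_eq_card htind
  -- r is at most the rank of H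
  have hr_rank : r ≤ subgroupRank H := by
    haveI hfgH : AddGroup.FG ↥H := by
      rw [← hX]; infer_instance
    haveI : Module.Finite ℤ ↥H := Module.Finite.iff_addGroup_fg.mpr hfgH
    set f0 : ↥H →ₗ[ℤ] (ι → ℚ) :=
      castLin ∘ₗ π ∘ₗ (H.subtype.toIntLinearMap) with hf0def
    set g : ℚ ⊗[ℤ] ↥H →ₗ[ℚ] (ι → ℚ) := LinearMap.liftBaseChange ℚ f0 with hgdef
    have hVrange : V ≤ LinearMap.range g := by
      rw [hVdef]
      rw [Submodule.span_le]
      rintro y ⟨z, ⟨w, hw, rfl⟩, rfl⟩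
      have hwH : w ∈ H := by rw [hX.symm]; exact AddSubgroup.subset_closure hw
      refine ⟨(1 : ℚ) ⊗ₜ[ℤ] ⟨w, hwH⟩, ?_⟩
      rw [hgdef, LinearMap.liftBaseChange_tmul, one_smul]
      rfl
    calc r = finrank ℚ ↥V := hrV.symm
    _ ≤ finrank ℚ ↥(LinearMap.range g) := Submodule.finrank_mono hVrange
    _ ≤ finrank ℚ (ℚ ⊗[ℤ] ↥H) := LinearMap.finrank_range_le g
  have hr_card : r ≤ Fintype.card ι := by
    rw [← hrV, ← finrank_pi ℚ (ι := ι)]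
    exact Submodule.finrank_le V
  -- select rows
  set u : ι → (t' → ℚ) := fun i w => (w : ι → ℚ) i with hudef
  have hrowrank : finrank ℚ ↥(span ℚ (Set.range u)) = r := by
    set MQ : Matrix ι t' ℚ := Matrix.of u with hMQdef
    have hcols : Set.range MQ.transpose = tset := by
      ext y
      constructor
      · rintro ⟨w, rfl⟩
        have : MQ.transpose w = (w : ι → ℚ) := by ext i; rfl
        rw [this]; exact w.2
      · intro hy
        exact ⟨⟨y, hy⟩, by ext i; rfl⟩
    have h1 : MQ.rank = r := by
      rw [Matrix.rank_eq_finrank_span_cols, show MQ.col = MQ.transpose from rfl, hcols, ← hVspan, hrV]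
    have h2 : MQ.transpose.rank = finrank ℚ ↥(span ℚ (Set.range u)) := by
      rw [Matrix.rank_eq_finrank_span_cols, Matrix.col_transpose, show MQ.row = MQ from rfl]
      have : Set.range MQ = Set.range u := rfl
      rw [this]
    rw [← h2, Matrix.rank_transpose, h1]
  obtain ⟨w2, hw2sub, hw2span, hw2ind⟩ := exists_linearIndependent ℚ (Set.range u)
  have hw2fin : w2.Finite := (Set.finite_range u).subset hw2sub
  haveI : Fintype ↥w2 := hw2fin.fintype
  set K := ↥w2
  have hKcard : Fintype.card K = r := by
    have h1 : finrank ℚ ↥(span ℚ w2) = Fintype.card K := by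
      rw [← Subtype.range_coe (s := w2)]
      exact finrank_span_eq_card hw2ind
    rw [← h1, hw2span, hrowrank]
  -- choose a row index for each element of w2
  have hch : ∀ k : K, ∃ i : ι, u i = (k : t' → ℚ) := fun k => hw2sub k.2
  choose emb h_emb using hch
  -- the projection onto selected coordinates
  set p : (ι → ℤ) →ₗ[ℤ] (K → ℤ) := LinearMap.funLeft ℤ ℤ emb with hpdef
  have hp_apply : ∀ v : ι → ℤ, ∀ k : K, p v k = v (emb k) := fun v k => rfl
  -- key injectivity on V
  have hproj : ∀ v ∈ V, (∀ k : K, v (emb k) = 0) → v = 0 := by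
    intro v hv hz
    funext i
    have hui : u i ∈ span ℚ (Set.range (Subtype.val : w2 → (t' → ℚ))) := by
      rw [Subtype.range_coe, hw2span]
      exact Submodule.subset_span (Set.mem_range_self i)
    rw [mem_span_range_iff_exists_fun] at hui
    obtain ⟨c, hc⟩ := hui
    have main : ∀ y ∈ V, (y : ι → ℚ) i = ∑ k : K, c k * y (emb k) := by
      intro y hy
      rw [hVspan] at hy
      induction hy using Submodule.span_induction with
      | mem y hy =>
        have h0 := congrFun hc ⟨y, hy⟩
        simp only [Finset.sum_apply, Pi.smul_apply, smul_eq_mul] at h0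
        have heval : ∀ k : K, ((k : t' → ℚ)) ⟨y, hy⟩ = y (emb k) := fun k => by
          rw [← h_emb k]
        calc y i = u i ⟨y, hy⟩ := rfl
        _ = ∑ k : K, c k * ((k : t' → ℚ)) ⟨y, hy⟩ := h0.symm
        _ = ∑ k : K, c k * y (emb k) := by
            exact Finset.sum_congr rfl fun k _ => by rw [heval k]
      | zero => simp
      | add y z hy hz ihy ihz => simp [ihy, ihz, mul_add, Finset.sum_add_distrib]
      | smul q y hy ihy =>
        simp only [Pi.smul_apply, smul_eq_mul, ihy, Finset.mul_sum]
        exact Finset.sum_congr rfl fun k _ => by ring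
    have := main v hv
    rw [this]
    simp [hz]
  -- choose integer preimages of tset
  have hpre : ∀ j : t', ∃ z : ι → ℤ, (∃ x ∈ X, π x = z) ∧ castLin z = (j : ι → ℚ) := by
    rintro ⟨y, hy⟩
    obtain ⟨z, hz, rfl⟩ := htsub hy
    obtain ⟨x, hx, rfl⟩ := hz
    exact ⟨π x, ⟨x, hx, rfl⟩, rfl⟩
  choose w hwX hwcast using hpre
  have hwB : ∀ j : t', ∀ i, |w j i| ≤ (B : ℤ) := by
    intro j i
    obtain ⟨x, hx, hxe⟩ := hwX j
    rw [← hxe]; exact hXB x hx i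
  set L' : Submodule ℤ (ι → ℤ) := span ℤ (Set.range w) with hL'def
  have hL'L : L' ≤ L := by
    rw [hL'def, Submodule.span_le]
    rintro z ⟨j, rfl⟩
    obtain ⟨x, hx, hxe⟩ := hwX j
    rw [← hxe]
    exact ⟨x, Submodule.subset_span hx, rfl⟩
  have hcardKt : Fintype.card K = Fintype.card t' := by
    rw [hKcard, hrdef]
  let e : K ≃ t' := Fintype.equivOfCardEq hcardKt
  set D : Matrix K K ℤ := Matrix.of (fun k k' => w (e k') (emb k)) with hDdef
  have hDQ : ∀ k k' : K, ((D k k' : ℤ) : ℚ) = ((k : t' → ℚ)) (e k') := by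
    intro k k'
    calc ((D k k' : ℤ) : ℚ) = castLin (w (e k')) (emb k) := rfl
    _ = ((e k' : Set.Elem tset) : ι → ℚ) (emb k) := by rw [hwcast (e k')]
    _ = u (emb k) (e k') := rfl
    _ = ((k : t' → ℚ)) (e k') := by rw [h_emb k]
  have hdetD : D.det ≠ 0 := by
    have hlin : LinearIndependent ℚ (fun k : K => ((k : t' → ℚ)) ∘ e) := by
      have h1 := hw2ind.map' (LinearEquiv.funCongrLeft ℚ ℚ e).toLinearMap
        (LinearMap.ker_eq_bot.mpr (LinearEquiv.funCongrLeft ℚ ℚ e).injective)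
      convert h1 using 1
      all_goals rfl
    have hrows : LinearIndependent ℚ (fun k : K => (D.map (Int.cast : ℤ → ℚ)) k) := by
      convert hlin using 1
      funext k
      funext k'
      rw [Matrix.map_apply, hDQ]
      rfl
    have hunit : IsUnit (D.map (Int.cast : ℤ → ℚ)) :=
      Matrix.linearIndependent_rows_iff_isUnit.mp hrows
    have hdq : (D.map (Int.cast : ℤ → ℚ)).det ≠ 0 :=
      (Matrix.isUnit_iff_isUnit_det _).mp hunit |>.ne_zero
    intro h0
    apply hdq
    have := RingHom.map_det (Int.castRingHom ℚ) D
    rw [h0] at this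
    rw [show (D.map (Int.cast : ℤ → ℚ)) = (Int.castRingHom ℚ).mapMatrix D from rfl, ← this]
    simp
  have hdet_le : (D.det).natAbs ≤ r.factorial * B ^ r := by
    have habs : ∀ k k' : K, |D k k'| ≤ (B : ℤ) := fun k k' => hwB (e k') (emb k)
    have h1 := Matrix.det_le (A := D) (abv := AbsoluteValue.abs) (x := (B : ℤ)) habs
    rw [hKcard] at h1
    have h2 : ((D.det.natAbs : ℕ) : ℤ) ≤ ((r.factorial * B ^ r : ℕ) : ℤ) := by
      rw [← Int.abs_eq_natAbs]
      push_cast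
      calc |D.det| ≤ r.factorial • (B : ℤ) ^ r := h1
      _ = (r.factorial : ℤ) * (B : ℤ) ^ r := nsmul_eq_mul _ _
    exact_mod_cast h2
  -- the cokernel
  set G0 : (K → ℤ) →ₗ[ℤ] (K → ℤ) := D.mulVecLin with hG0def
  have hG0inj : Function.Injective G0 := by
    intro x y hxy
    have h0 : D.mulVec x = D.mulVec y := hxy
    have h1 : (D.adjugate * D).mulVec x = (D.adjugate * D).mulVec y := by
      rw [← Matrix.mulVec_mulVec, ← Matrix.mulVec_mulVec, h0]
    rw [Matrix.adjugate_mul, Matrix.smul_mulVec, Matrix.smul_mulVec,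
      Matrix.one_mulVec, Matrix.one_mulVec] at h1
    funext k
    have h2 := congrFun h1 k
    simp only [Pi.smul_apply, smul_eq_mul] at h2
    exact mul_left_cancel₀ hdetD h2
  have hG0det : LinearMap.det G0 = D.det := by
    rw [hG0def, show D.mulVecLin = Matrix.toLin' D from by ext v; simp [Matrix.toLin'_apply],
      LinearMap.det_toLin']
  have hG0range : LinearMap.range G0 = Submodule.map p L' := by
    rw [hG0def, Matrix.range_mulVecLin, hL'def, Submodule.map_span]
    congr 1
    ext z
    constructor
    · rintro ⟨k', rfl⟩
      refine ⟨w (e k'), Set.mem_range_self _, ?_⟩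
      funext k
      rfl
    · rintro ⟨z', ⟨j, rfl⟩, rfl⟩
      refine ⟨e.symm j, ?_⟩
      funext k
      show D k (e.symm j) = p (w j) k
      rw [hp_apply]
      show w (e (e.symm j)) (emb k) = w j (emb k)
      rw [e.apply_symm_apply]
  obtain ⟨hQfin, hQcard⟩ := aux_card_coker G0 hG0inj
  rw [hG0range] at hQfin hQcard
  rw [hG0det] at hQcard
  -- the subgroup chain
  set π' := π.toAddMonoidHom with hπ'def
  have hπ'app : ∀ x : A, π' x = π x := fun x => rfl
  set Lad : AddSubgroup (ι → ℤ) := L.toAddSubgroup with hLaddef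
  set iso := isolator H with hisodef
  have hHiso : H ≤ iso := fun x hx => ⟨1, one_pos, by simpa using hx⟩
  have hπH_L : ∀ x ∈ H, π x ∈ L := fun x hx => ⟨x, (hmemH x).mp hx, rfl⟩
  set Kg : AddSubgroup A := (Lad.comap π') ⊓ iso with hKgdef
  have hHKg : H ≤ Kg := fun x hx => ⟨hπH_L x hx, hHiso hx⟩
  have hKgiso : Kg ≤ iso := inf_le_right
  have hsplit : subgroupDet H = H.relIndex Kg * Kg.relIndex iso :=
    (AddSubgroup.relIndex_mul_relIndex (H := H) (K := Kg) (L := iso) hHKg hKgiso).symm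
  -- first factor
  set Tiso : AddSubgroup A := ((LinearMap.ker π).toAddSubgroup ⊓ iso) with hTisodef
  haveI hTfin : Finite ↥Tiso := by
    refine Finite.of_injective (fun t : ↥Tiso => (⟨t.1, t.2.1⟩ : LinearMap.ker π)) ?_
    intro a b hab
    have h' := congrArg Subtype.val hab
    exact Subtype.ext h' 
  have hTmem : ∀ t : ↥Tiso, t.1 ∈ Kg := by
    intro t
    refine ⟨?_, t.2.2⟩
    show π' t.1 ∈ Lad
    have : π t.1 = 0 := t.2.1
    rw [hπ'app, this]
    exact Lad.zero_mem
  have hb1 : H.relIndex Kg ≤ Nat.card (LinearMap.ker π) := by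
    have hsurj : Function.Surjective
        (fun t : ↥Tiso => (QuotientAddGroup.mk ⟨t.1, hTmem t⟩ : ↥Kg ⧸ H.addSubgroupOf Kg)) := by
      intro q
      induction q using QuotientAddGroup.induction_on with
      | H k =>
        obtain ⟨hk1, hk2⟩ := k.2
        obtain ⟨h0, hh0, hπeq⟩ := hk1
        have hh0H : h0 ∈ H := (hmemH h0).mpr hh0
        have ht1 : π (k.1 - h0) = 0 := by
          rw [hπ'app] at hπeq
          rw [map_sub, ← hπeq, sub_self]
        have ht2 : (k.1 - h0) ∈ iso := sub_mem hk2 (hHiso hh0H)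
        refine ⟨⟨k.1 - h0, ⟨ht1, ht2⟩⟩, ?_⟩
        rw [QuotientAddGroup.eq]
        show -(k.1 - h0) + k.1 ∈ H
        have : -(k.1 - h0) + k.1 = h0 := by abel
        rw [this]
        exact hh0H
    calc H.relIndex Kg = Nat.card (↥Kg ⧸ H.addSubgroupOf Kg) := rfl
    _ ≤ Nat.card ↥Tiso := Nat.card_le_card_of_surjective _ hsurj
    _ ≤ Nat.card (LinearMap.ker π) :=
        Nat.card_le_card_of_injective (fun t : ↥Tiso => (⟨t.1, t.2.1⟩ : LinearMap.ker π))
          (fun a b hab => by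
            have h' := congrArg Subtype.val hab
            exact Subtype.ext h')
  -- second factor
  set Mad : AddSubgroup (ι → ℤ) := AddSubgroup.map π' iso with hMaddef
  have hb2eq : Kg.relIndex iso = Lad.relIndex Mad := by
    rw [hKgdef, AddSubgroup.inf_relIndex_right, AddSubgroup.relIndex_comap]
  have hMkey : ∀ y ∈ Mad, p y = 0 → y = 0 := by
    rintro y ⟨s, hs, rfl⟩ hpy
    obtain ⟨nn, hnn, hnns⟩ := hs
    have h1 : π (nn • s) ∈ L := hπH_L _ hnns
    have h2 : castLin (π' s) ∈ V := by
      have h3 : castLin (π (nn • s)) ∈ V := hVle _ h1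
      rw [map_nsmul, map_nsmul] at h3
      have h4 : (nn : ℚ) • castLin (π s) ∈ V := by rwa [Nat.cast_smul_eq_nsmul]
      have h5 := V.smul_mem ((nn : ℚ)⁻¹) h4
      rwa [smul_smul, inv_mul_cancel₀ (by exact_mod_cast hnn.ne' : (nn : ℚ) ≠ 0), one_smul] at h5
    have h5 : ∀ k : K, castLin (π' s) (emb k) = 0 := by
      intro k
      have h6 := congrFun hpy k
      rw [hp_apply] at h6
      rw [castLin_apply]
      exact_mod_cast h6
    apply castLin_inj
    rw [hproj _ h2 h5, map_zero]
  have hLMad : ∀ l ∈ L, l ∈ Mad := by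
    rintro l ⟨x, hx, rfl⟩
    exact ⟨x, hHiso ((hmemH x).mpr hx), rfl⟩
  have hsurjmap : Function.Surjective (QuotientAddGroup.map
      (Submodule.map p L').toAddSubgroup (Submodule.map p L).toAddSubgroup
      (AddMonoidHom.id _) (fun z hz => Submodule.map_mono hL'L hz)) := by
    intro q
    induction q using QuotientAddGroup.induction_on with
    | H z => exact ⟨QuotientAddGroup.mk z, rfl⟩
  haveI hfinL : Finite ((K → ℤ) ⧸ (Submodule.map p L).toAddSubgroup) :=
    Finite.of_surjective _ hsurjmap
  have hcard_le2 : Nat.card ((K → ℤ) ⧸ (Submodule.map p L).toAddSubgroup)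
      ≤ r.factorial * B ^ r := by
    calc Nat.card ((K → ℤ) ⧸ (Submodule.map p L).toAddSubgroup)
        ≤ Nat.card ((K → ℤ) ⧸ (Submodule.map p L').toAddSubgroup) :=
          Nat.card_le_card_of_surjective _ hsurjmap
    _ = (D.det).natAbs := hQcard
    _ ≤ r.factorial * B ^ r := hdet_le
  have hb2 : Lad.relIndex Mad ≤ r.factorial * B ^ r := by
    set ψ : ↥Mad →+ (K → ℤ) ⧸ (Submodule.map p L).toAddSubgroup :=
      (QuotientAddGroup.mk' _).comp ((p.toAddMonoidHom).comp Mad.subtype) with hψdef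
    have hkerψ : ψ.ker = Lad.addSubgroupOf Mad := by
      ext x
      rw [AddMonoidHom.mem_ker, hψdef]
      rw [AddSubgroup.mem_addSubgroupOf]
      show ((p x.1 : (K → ℤ) ⧸ (Submodule.map p L).toAddSubgroup) = 0) ↔ _
      rw [QuotientAddGroup.eq_zero_iff]
      constructor
      · rintro ⟨l, hl, hpl⟩
        have hxl : x.1 - l ∈ Mad := sub_mem x.2 (hLMad l hl)
        have hz0 : p (x.1 - l) = 0 := by rw [map_sub, hpl, sub_self]
        have := hMkey _ hxl hz0
        have hxeq : x.1 = l := by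
          have := sub_eq_zero.mp this
          exact this
        show x.1 ∈ Lad
        rw [hxeq]
        exact hl
      · intro hx
        exact ⟨x.1, hx, rfl⟩
    have hrel : Lad.relIndex Mad = ψ.ker.index := by
      rw [AddSubgroup.relIndex, hkerψ]
    rw [hrel]
    calc ψ.ker.index = Nat.card (↥Mad ⧸ ψ.ker) := rfl
    _ ≤ Nat.card ((K → ℤ) ⧸ (Submodule.map p L).toAddSubgroup) :=
        Nat.card_le_card_of_injective _ (QuotientAddGroup.kerLift_injective ψ)
    _ ≤ r.factorial * B ^ r := hcard_le2
  refine ⟨r, hr_rank, hr_card, ?_⟩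
  rw [hsplit]
  exact Nat.mul_le_mul hb1 (le_trans (le_of_eq hb2eq) hb2)


theorem det_bound_by_norm (A : Type*) [AddCommGroup A] (S : Finset A)
    (hS : AddSubgroup.closure (S : Set A) = ⊤) :
    ∃ C : ℝ, 0 < C ∧ ∀ H : AddSubgroup A,
      (subgroupDet H : ℝ) ≤ C * (subgroupNorm (S : Set A) H : ℝ) ^ subgroupRank H := by
  classical
  haveI : Module.Finite ℤ A :=
    Module.Finite.iff_addGroup_fg.mpr (AddGroup.fg_iff.mpr ⟨S, hS, S.finite_toSet⟩)
  haveI : IsNoetherian ℤ A := isNoetherian_of_isNoetherianRing_of_finite ℤ A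
  set T := Submodule.torsion ℤ A with hTdef
  set ι := Module.Free.ChooseBasisIndex ℤ (A ⧸ T) with hιdef
  set bQ := Module.Free.chooseBasis ℤ (A ⧸ T) with hbQdef
  letI : DecidableEq ι := Classical.decEq _
  set π : A →ₗ[ℤ] (ι → ℤ) := bQ.equivFun.toLinearMap ∘ₗ T.mkQ with hπdef
  have hkerπ : LinearMap.ker π = T := by
    rw [hπdef, LinearMap.ker_comp, LinearEquiv.ker, Submodule.comap_bot, Submodule.ker_mkQ]
  haveI hTfin : Finite ↥(LinearMap.ker π) := by
    rw [hkerπ]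
    haveI : Module.Finite ℤ ↥T := Module.Finite.iff_fg.mpr (IsNoetherian.noetherian T)
    exact Module.finite_of_fg_torsion ↥T (Submodule.torsion_isTorsion)
  set C0 : ℤ := ∑ s ∈ S, ∑ i, |π s i| with hC0def
  have hC0nonneg : 0 ≤ C0 :=
    Finset.sum_nonneg fun s _ => Finset.sum_nonneg fun i _ => abs_nonneg _
  have hC0b : ∀ s ∈ S, ∀ i, |π s i| ≤ C0 := by
    intro s hs i
    calc |π s i| ≤ ∑ i', |π s i'| :=
      Finset.single_le_sum (f := fun i' => |π s i'|) (fun i' _ => abs_nonneg _) (Finset.mem_univ i)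
    _ ≤ C0 := Finset.single_le_sum (f := fun s' => ∑ i', |π s' i'|)
        (fun s' _ => Finset.sum_nonneg fun _ _ => abs_nonneg _) hs
  set c0 : ℕ := C0.toNat with hc0def
  have hc0cast : (c0 : ℤ) = C0 := Int.toNat_of_nonneg hC0nonneg
  set n := Fintype.card ι with hndef
  set cT := Nat.card ↥(LinearMap.ker π) with hcTdef
  have hcT : 0 < cT := Nat.card_pos
  have hCpos : 0 < cT * n.factorial * (c0 + 1) ^ n :=
    Nat.mul_pos (Nat.mul_pos hcT n.factorial_pos) (pow_pos (Nat.succ_pos c0) n)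
  refine ⟨((cT * n.factorial * (c0 + 1) ^ n : ℕ) : ℝ), by exact_mod_cast hCpos, ?_⟩
  intro H
  set m := subgroupNorm (S : Set A) H with hmdef
  have hHfgset : ∃ Xf : Finset A, AddSubgroup.closure (Xf : Set A) = H := by
    obtain ⟨Xf, hXf⟩ := IsNoetherian.noetherian (AddSubgroup.toIntSubmodule H)
    refine ⟨Xf, ?_⟩
    rw [← Submodule.span_int_eq_addSubgroupClosure, hXf]
    exact AddSubgroup.toIntSubmodule_toAddSubgroup H
  have hmem_norm : ∃ X : Finset A, AddSubgroup.closure (X : Set A) = H ∧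
      ∀ x ∈ X, wordLength (S : Set A) x ≤ m := by
    obtain ⟨Xf, hXcl⟩ := hHfgset
    have hne : {m' | ∃ X : Finset A, AddSubgroup.closure (X : Set A) = H ∧
        ∀ x ∈ X, wordLength (S : Set A) x ≤ m'}.Nonempty :=
      ⟨Xf.sup (wordLength (S : Set A)), Xf, hXcl, fun x hx => Finset.le_sup hx⟩
    have hmem := Nat.sInf_mem hne
    exact hmem
  obtain ⟨X, hXcl, hXlen⟩ := hmem_norm
  by_cases hm : m = 0
  · -- norm zero: H is trivial
    have hX0 : ∀ x ∈ X, x = (0 : A) := by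
      intro x hx
      have h0 : wordLength (S : Set A) x = 0 :=
        le_antisymm (hm ▸ hXlen x hx) (Nat.zero_le _)
      obtain ⟨l, _, hl2, hl3⟩ := exists_word_len hS x
      rw [h0] at hl2
      rw [← hl3, List.length_eq_zero_iff.mp hl2]
      rfl
    have hHbot : H = ⊥ := by
      rw [← hXcl, eq_bot_iff]
      rw [AddSubgroup.closure_le]
      intro x hx
      have hx' : x ∈ X := hx
      rw [hX0 x hx']
      simp
    haveI : Subsingleton ↥H := by
      rw [hHbot]
      exact ⟨fun a b => Subtype.ext (by rw [AddSubgroup.mem_bot.mp a.2, AddSubgroup.mem_bot.mp b.2])⟩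
    haveI := subsingleton_qtensor ↥H
    have hrank0 : subgroupRank H = 0 := finrank_zero_of_subsingleton
    have hdet_le : subgroupDet H ≤ cT := by
      rw [hHbot]
      have hle : ∀ x ∈ isolator (⊥ : AddSubgroup A), x ∈ LinearMap.ker π := by
        rintro x ⟨nn, hnn, h0⟩
        rw [hkerπ]
        rw [AddSubgroup.mem_bot] at h0
        refine (Submodule.mem_torsion_iff x).mpr ⟨⟨(nn : ℤ), mem_nonZeroDivisors_of_ne_zero (by exact_mod_cast hnn.ne')⟩, ?_⟩
        show (nn : ℤ) • x = 0
        rw [natCast_zsmul, h0]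
      calc subgroupDet (⊥ : AddSubgroup A) = Nat.card ↥(isolator (⊥ : AddSubgroup A)) := by
            rw [subgroupDet, AddSubgroup.relIndex_bot_left]
      _ ≤ cT := Nat.card_le_card_of_injective
            (fun t : ↥(isolator (⊥ : AddSubgroup A)) => (⟨t.1, hle t.1 t.2⟩ : LinearMap.ker π))
            (fun a b hab => by
              have h' := congrArg Subtype.val hab
              exact Subtype.ext h')
    rw [hrank0, hm]
    simp only [Nat.cast_zero, pow_zero, mul_one]
    have : cT ≤ cT * n.factorial * (c0 + 1) ^ n := by
      calc cT = cT * 1 * 1 := by ring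
      _ ≤ cT * n.factorial * (c0 + 1) ^ n := by
          gcongr
          · exact n.factorial_pos
          · exact Nat.one_le_pow _ _ (Nat.succ_pos c0)
    calc (subgroupDet H : ℝ) ≤ (cT : ℝ) := by exact_mod_cast hdet_le
    _ ≤ _ := by exact_mod_cast this
  · have hm1 : 1 ≤ m := Nat.one_le_iff_ne_zero.mpr hm
    have hXB : ∀ x ∈ X, ∀ i, |π x i| ≤ ((c0 * m : ℕ) : ℤ) := by
      intro x hx i
      obtain ⟨l, hl1, hl2, hl3⟩ := exists_word_len hS x
      have hlen : l.length ≤ m := by rw [hl2]; exact hXlen x hx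
      have hb := coord_bound π hC0b l hl1 i
      rw [hl3] at hb
      calc |π x i| ≤ l.length * C0 := hb
      _ ≤ (m : ℤ) * C0 := by
          apply mul_le_mul_of_nonneg_right _ hC0nonneg
          exact_mod_cast hlen
      _ = ((c0 * m : ℕ) : ℤ) := by
          rw [← hc0cast]; push_cast; ring
    obtain ⟨r, hr_rank, hr_n, hbound⟩ := main_count π H X hXcl (c0 * m) hXB
    have hchain : subgroupDet H ≤ cT * n.factorial * (c0 + 1) ^ n * m ^ subgroupRank H := by
      calc subgroupDet H ≤ cT * (r.factorial * (c0 * m) ^ r) := hbound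
      _ ≤ cT * (n.factorial * ((c0 + 1) ^ n * m ^ subgroupRank H)) := by
          apply Nat.mul_le_mul_left
          apply Nat.mul_le_mul (Nat.factorial_le hr_n)
          rw [mul_pow]
          apply Nat.mul_le_mul
          · calc c0 ^ r ≤ (c0 + 1) ^ r := Nat.pow_le_pow_left (Nat.le_succ c0) r
            _ ≤ (c0 + 1) ^ n := Nat.pow_le_pow_right (Nat.succ_pos c0) hr_n
          · exact Nat.pow_le_pow_right hm1 hr_rank
      _ = cT * n.factorial * (c0 + 1) ^ n * m ^ subgroupRank H := by ring
    calc (subgroupDet H : ℝ)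
        ≤ ((cT * n.factorial * (c0 + 1) ^ n * m ^ subgroupRank H : ℕ) : ℝ) := by
          exact_mod_cast hchain
    _ = _ := by push_cast; ring


end Aux
end

section
/- Let S be a generating set of ℤ^k (say the standard basis). There exists C > 0 such that for every injective linear map φ : ℤ^k → ℤ^k and every x ∈ ℤ^k, ‖x‖_S ≤ C · (max{‖φ‖_S, ‖φ(x)‖_S})^k / |det(φ)|, where ‖φ‖_S = max_{s∈S} ‖φ(s)‖_S. -/
/-- The ℓ¹-norm (word norm with respect to the standard generating set) on `ℤ^k`. -/
def l1Norm {k : ℕ} (x : Fin k → ℤ) : ℕ := ∑ j, (x j).natAbs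

/-- The norm of a homomorphism `ℤ^k → ℤ^k` with respect to the standard generating
set: the maximum of the norms of the images of the standard basis vectors. -/
def stdNorm {k : ℕ} (φ : (Fin k → ℤ) →ₗ[ℤ] (Fin k → ℤ)) : ℕ :=
  Finset.univ.sup fun i => l1Norm (φ (Pi.single i 1))

open Matrix in
theorem cramer_word_length_bound (k : ℕ) :
    ∃ C : ℝ, 0 < C ∧
      ∀ φ : (Fin k → ℤ) →ₗ[ℤ] (Fin k → ℤ), Function.Injective φ →
        ∀ x : Fin k → ℤ,
          (l1Norm x : ℝ) ≤
            C * (max (stdNorm φ) (l1Norm (φ x)) : ℝ) ^ k / |((LinearMap.det φ : ℤ) : ℝ)| := by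
  refine ⟨(k.factorial : ℝ), by positivity, fun φ hφ x => ?_⟩
  set A := LinearMap.toMatrix' φ with hA
  set M : ℕ := max (stdNorm φ) (l1Norm (φ x)) with hM
  -- A acts as φ
  have hAact : ∀ v : Fin k → ℤ, A *ᵥ v = φ v := by
    intro v
    rw [← Matrix.toLin'_apply, hA, Matrix.toLin'_toMatrix']
  have hAdet : A.det = LinearMap.det φ := LinearMap.det_toMatrix' φ
  -- det ≠ 0
  have hdet : (LinearMap.det φ : ℤ) ≠ 0 := by
    intro h
    obtain ⟨v, hv0, hv⟩ := Matrix.exists_mulVec_eq_zero_iff.2 (hAdet.trans h)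
    exact hv0 (hφ (by rw [← hAact v] at *; simpa using hv))
  have hdetpos : (0:ℝ) < |((LinearMap.det φ : ℤ) : ℝ)| := by
    rw [abs_pos]; exact_mod_cast hdet
  rw [le_div_iff₀ hdetpos, ← Nat.cast_max]
  -- reduce to an integer inequality
  have : (l1Norm x : ℤ) * |(LinearMap.det φ : ℤ)| ≤ (k.factorial : ℤ) * (M : ℤ) ^ k := by
    -- entry bound
    have hAM : ∀ i j, |A i j| ≤ (M : ℤ) := by
      intro i j
      have h1 : A i j = φ (Pi.single j 1) i := by
        have e : (Pi.single j 1 : Fin k → ℤ) = fun j' => if j' = j then 1 else 0 := by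
          ext j'; simp [Pi.single_apply]
        rw [hA, LinearMap.toMatrix'_apply, e]
      have h2 : (A i j).natAbs ≤ l1Norm (φ (Pi.single j 1)) := by
        rw [h1, l1Norm]
        exact Finset.single_le_sum (f := fun j' => (φ (Pi.single j 1) j').natAbs)
          (fun _ _ => Nat.zero_le _) (Finset.mem_univ i)
      have h3 : l1Norm (φ (Pi.single j 1)) ≤ stdNorm φ :=
        Finset.le_sup (f := fun i => l1Norm (φ (Pi.single i 1))) (Finset.mem_univ j)
      have : (A i j).natAbs ≤ M := le_trans (le_trans h2 h3) (le_max_left _ _)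
      rw [Int.abs_eq_natAbs]
      exact_mod_cast this
    -- Cramer: det • x = adjugate A *ᵥ (φ x)
    have hcramer : ∀ i, A.det * x i = ∑ j, A.adjugate i j * (φ x) j := by
      intro i
      have : A.adjugate *ᵥ (A *ᵥ x) = A.det • x := by
        rw [Matrix.mulVec_mulVec, Matrix.adjugate_mul, Matrix.smul_mulVec,
          Matrix.one_mulVec]
      rw [hAact] at this
      have := congrFun this i
      simpa [Matrix.mulVec, dotProduct, mul_comm] using this.symm
    -- handle k = 0 separately
    rcases k with _ | n
    · simp [l1Norm]
    -- adjugate entry bound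
    have hadj : ∀ i j, |A.adjugate i j| ≤ (n.factorial : ℤ) * (M : ℤ) ^ n := by
      intro i j
      rw [Matrix.adjugate_fin_succ_eq_det_submatrix, abs_mul, abs_pow, abs_neg, abs_one,
        one_pow, one_mul]
      have := Matrix.det_le (A := A.submatrix j.succAbove i.succAbove)
        (abv := AbsoluteValue.abs) (x := (M : ℤ)) (fun i' j' => hAM _ _)
      simpa [nsmul_eq_mul] using this
    -- per-coordinate bound
    have hcoord : ∀ i, |A.det| * |x i| ≤ (n.factorial : ℤ) * (M : ℤ) ^ n * (M : ℤ) := by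
      intro i
      calc |A.det| * |x i| = |∑ j, A.adjugate i j * (φ x) j| := by
            rw [← abs_mul, hcramer i]
        _ ≤ ∑ j, |A.adjugate i j * (φ x) j| := Finset.abs_sum_le_sum_abs _ _
        _ ≤ ∑ j, (n.factorial : ℤ) * (M : ℤ) ^ n * |(φ x) j| := by
            refine Finset.sum_le_sum fun j _ => ?_
            rw [abs_mul]
            exact mul_le_mul_of_nonneg_right (hadj i j) (abs_nonneg _)
        _ = (n.factorial : ℤ) * (M : ℤ) ^ n * ∑ j, |(φ x) j| := by
            rw [← Finset.mul_sum]
        _ ≤ (n.factorial : ℤ) * (M : ℤ) ^ n * (M : ℤ) := by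
            refine mul_le_mul_of_nonneg_left ?_ (by positivity)
            have h1 : ∑ j, |(φ x) j| = ((l1Norm (φ x) : ℕ) : ℤ) := by
              rw [l1Norm, Nat.cast_sum]
              exact Finset.sum_congr rfl fun j _ => Int.abs_eq_natAbs _
            rw [h1]
            exact_mod_cast le_max_right (stdNorm φ) (l1Norm (φ x))
    -- sum over coordinates
    calc (l1Norm x : ℤ) * |(LinearMap.det φ : ℤ)|
        = ∑ i, |A.det| * |x i| := by
          rw [← hAdet, l1Norm, Nat.cast_sum, Finset.sum_mul]
          exact Finset.sum_congr rfl fun i _ => by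
            rw [Int.abs_eq_natAbs (x i)]; ring
      _ ≤ ∑ _i : Fin (n+1), (n.factorial : ℤ) * (M : ℤ) ^ n * (M : ℤ) :=
          Finset.sum_le_sum fun i _ => hcoord i
      _ = ((n+1).factorial : ℤ) * (M : ℤ) ^ (n+1) := by
          rw [Finset.sum_const, Finset.card_univ, Fintype.card_fin, Nat.factorial_succ]
          push_cast; ring
  calc (l1Norm x : ℝ) * |((LinearMap.det φ : ℤ) : ℝ)|
      = (((l1Norm x : ℤ) * |(LinearMap.det φ : ℤ)| : ℤ) : ℝ) := by push_cast; ring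
    _ ≤ (((k.factorial : ℤ) * (M : ℤ) ^ k : ℤ) : ℝ) := by exact_mod_cast this
    _ = (k.factorial : ℝ) * (M : ℝ) ^ k := by push_cast; ring
end

section
/- Let H_3(ℤ) be the integral Heisenberg group with presentation ⟨x, y, z | [x,y]=z, z central⟩, let p be a prime, and let π : H_3(ℤ) → Q be a surjective homomorphism onto a finite q-group for a prime q ≠ p. Then for every natural number m, the elements π(x^p) and π(x^p z^m) are conjugate in Q. -/
/-- The discrete Heisenberg group `H₃(ℤ)`, realized as triples `(a, b, c)` of
integers, corresponding to the unitriangular matrix `[[1, a, c], [0, 1, b], [0, 0, 1]]`. -/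
@[ext]
structure Heisenberg where
  a : ℤ
  b : ℤ
  c : ℤ

namespace Heisenberg

instance : Mul Heisenberg :=
  ⟨fun p q => ⟨p.a + q.a, p.b + q.b, p.c + q.c + p.a * q.b⟩⟩

instance : One Heisenberg := ⟨⟨0, 0, 0⟩⟩

instance : Inv Heisenberg := ⟨fun p => ⟨-p.a, -p.b, p.a * p.b - p.c⟩⟩

@[simp] lemma mul_a (p q : Heisenberg) : (p * q).a = p.a + q.a := rfl
@[simp] lemma mul_b (p q : Heisenberg) : (p * q).b = p.b + q.b := rfl
@[simp] lemma mul_c (p q : Heisenberg) : (p * q).c = p.c + q.c + p.a * q.b := rfl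
@[simp] lemma one_a : (1 : Heisenberg).a = 0 := rfl
@[simp] lemma one_b : (1 : Heisenberg).b = 0 := rfl
@[simp] lemma one_c : (1 : Heisenberg).c = 0 := rfl
@[simp] lemma inv_a (p : Heisenberg) : p⁻¹.a = -p.a := rfl
@[simp] lemma inv_b (p : Heisenberg) : p⁻¹.b = -p.b := rfl
@[simp] lemma inv_c (p : Heisenberg) : p⁻¹.c = p.a * p.b - p.c := rfl

instance : Group Heisenberg where
  mul_assoc p q r := by ext <;> simp <;> ring
  one_mul p := by ext <;> simp
  mul_one p := by ext <;> simp
  inv_mul_cancel p := by ext <;> simp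

/-- The generator `x`. -/
def x : Heisenberg := ⟨1, 0, 0⟩

/-- The generator `y`. -/
def y : Heisenberg := ⟨0, 1, 0⟩

/-- The central element `z = [x, y]`. -/
def z : Heisenberg := ⟨0, 0, 1⟩

end Heisenberg

namespace Heisenberg

lemma x_pow (n : ℕ) : (x : Heisenberg) ^ n = ⟨n, 0, 0⟩ := by
  induction n with
  | zero => rfl
  | succ k ih => rw [pow_succ, ih]; ext <;> simp [x] <;> push_cast <;> ring

lemma z_pow (n : ℕ) : (z : Heisenberg) ^ n = ⟨0, 0, n⟩ := by
  induction n with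
  | zero => rfl
  | succ k ih => rw [pow_succ, ih]; ext <;> simp [z] <;> push_cast <;> ring

lemma z_zpow (k : ℤ) : (z : Heisenberg) ^ k = ⟨0, 0, k⟩ := by
  cases k with
  | ofNat n => rw [Int.ofNat_eq_natCast, zpow_natCast, z_pow]
  | negSucc n =>
    rw [zpow_negSucc, z_pow]
    ext <;> simp [Int.negSucc_eq] <;> ring

end Heisenberg


theorem heisenberg_conj_in_coprime_quotient (p q : ℕ) (hp : p.Prime) (hq : q.Prime)
    (hpq : q ≠ p) (Q : Type*) [Group Q] [Finite Q] (n : ℕ)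
    (hcard : Nat.card Q = q ^ n) (π : Heisenberg →* Q)
    (hsurj : Function.Surjective π) :
    ∀ m : ℕ, IsConj (π (Heisenberg.x ^ p)) (π (Heisenberg.x ^ p * Heisenberg.z ^ m)) := by
  intro m
  -- coprimality
  have hco : Nat.Coprime p (q ^ n) :=
    (((Nat.coprime_primes hp hq).mpr fun h => hpq h.symm)).pow_right n
  have hico : IsCoprime (p : ℤ) ((q : ℤ) ^ n) := by
    rw [Int.isCoprime_iff_gcd_eq_one]
    exact_mod_cast hco
  obtain ⟨u, v, huv⟩ := hico
  set t : ℤ := u * m with ht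
  -- the order relation
  have hz1 : (π Heisenberg.z) ^ ((q : ℤ) ^ n) = 1 := by
    have : (π Heisenberg.z) ^ (Nat.card Q) = 1 := pow_card_eq_one'
    rw [hcard] at this
    have := congrArg (fun g => g) this
    rw [show ((q : ℤ) ^ n) = ((q ^ n : ℕ) : ℤ) by push_cast; ring, zpow_natCast]
    exact this
  have hkey : (π Heisenberg.z) ^ ((p : ℤ) * t - m) = 1 := by
    have : (p : ℤ) * t - m = ((q:ℤ)^n) * (-(v * m)) := by
      have : u * (p : ℤ) = 1 - v * (q:ℤ)^n := by linarith [huv]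
      rw [ht]; nlinarith [this]
    rw [this, zpow_mul, hz1, one_zpow]
  -- rewrite targets
  have hx : Heisenberg.x ^ p = (⟨p, 0, 0⟩ : Heisenberg) := Heisenberg.x_pow p
  have hxz : Heisenberg.x ^ p * Heisenberg.z ^ m = (⟨p, 0, m⟩ : Heisenberg) := by
    rw [hx, Heisenberg.z_pow]; ext <;> simp
  rw [hxz, hx, isConj_iff]
  refine ⟨π ⟨0, -t, 0⟩, ?_⟩
  have hconj : (⟨0, -t, 0⟩ : Heisenberg) * ⟨p, 0, 0⟩ * (⟨0, -t, 0⟩ : Heisenberg)⁻¹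
      = (⟨p, 0, m⟩ : Heisenberg) * Heisenberg.z ^ ((p : ℤ) * t - m) := by
    rw [Heisenberg.z_zpow]; ext <;> simp <;> ring
  calc π ⟨0, -t, 0⟩ * π ⟨p, 0, 0⟩ * (π ⟨0, -t, 0⟩)⁻¹
      = π ((⟨0, -t, 0⟩ : Heisenberg) * ⟨p, 0, 0⟩ * (⟨0, -t, 0⟩ : Heisenberg)⁻¹) := by
        simp [map_mul]
    _ = π ⟨p, 0, m⟩ * (π Heisenberg.z) ^ ((p : ℤ) * t - m) := by
        rw [hconj, map_mul, map_zpow]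
    _ = π ⟨p, 0, m⟩ := by rw [hkey, mul_one]
end

section
/- Let G be a group containing a finite-index characteristic subgroup H with right coset representatives s_1, …, s_r (r = [G:H]). Fix φ ∈ Aut(G) with restriction φ̄ ∈ Aut(H), and x ∈ G. Set x_i = s_i · x · φ(s_i)⁻¹ and let f_{x,i} be conjugation by x_i restricted to H. Then the φ-twisted conjugacy class of x decomposes as [x]_φ = ⋃_{i=1}^r [1_H]_{f_{x,i} ∘ φ̄} · x_i, where [1_H]_{ψ} = { z·ψ(z)⁻¹ : z ∈ H }. -/
theorem twisted_conjugacy_class_decomposition (G : Type*) [Group G]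
    (H : Subgroup G) [H.Characteristic] (r : ℕ) (hr : H.index = r) (hrpos : 0 < r)
    (s : Fin r → G) (hcos : ∀ g : G, ∃ i : Fin r, g * (s i)⁻¹ ∈ H)
    (φ : G ≃* G) (x : G) :
    {w : G | ∃ y : G, y * x * (φ y)⁻¹ = w} =
      ⋃ i : Fin r,
        {w : G | ∃ z ∈ H,
          w = z * ((s i * x * (φ (s i))⁻¹) * φ z * (s i * x * (φ (s i))⁻¹)⁻¹)⁻¹ *
            (s i * x * (φ (s i))⁻¹)} := by
  ext w
  simp only [Set.mem_setOf_eq, Set.mem_iUnion]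
  constructor
  · rintro ⟨y, rfl⟩
    obtain ⟨i, hi⟩ := hcos y
    refine ⟨i, y * (s i)⁻¹, hi, ?_⟩
    have : y = (y * (s i)⁻¹) * s i := by group
    rw [this]
    simp only [map_mul, map_inv]
    group
  · rintro ⟨i, z, hz, rfl⟩
    refine ⟨z * s i, ?_⟩
    simp only [map_mul, map_inv]
    group
end
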